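/- Let p be a prime and let g(x) = b_e x^e + b_{e-1} x^{e-1} + ⋯ + b_0 ∈ ℚ[x] have degree e ≥ 1 with b_0 ≠ 0. Suppose NP_p(g) has successive vertices (0, ν_p(b_e)), (e−m_1, ν_p(b_{m_1})), …, (e−m_{t−1}, ν_p(b_{m_{t−1}})), (e, ν_p(b_0)), where e = m_0 > m_1 > ⋯ > m_t = 0, and set λ_i = (ν_p(b_{m_i}) − ν_p(b_{m_{i−1}}))/(m_{i−1} − m_i) for 1 ≤ i ≤ t. Let u be an integer with u > |λ_j| for every 1 ≤ j ≤ t, and let β be a positive integer with β ≤ d and gcd(β, u) = 1. Suppose f(x) = a_d x^d + ⋯ + a_1 x + a_0 ∈ ℚ[x] has degree d with ν_p(a_d) = 0 and ν_p(a_i) ≥ (u/β)(d−i) for every 0 ≤ i ≤ d with a_i ≠ 0. Then the Newton polygon NP_p(g(f(x))) of the composition g ∘ f has successive vertices (0, ν_p(b_e)), (d(e−m_1), ν_p(b_{m_1})), …, (d(e−m_{t−1}), ν_p(b_{m_{t−1}})), (de, ν_p(b_0)). -/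

import Mathlib

open Polynomial

/-- The `n`-th compositional iterate of `f`: `f^0 = X`, `f^{n+1} = f ∘ f^n`. -/
noncomputable def polyIter (f : Polynomial ℚ) : ℕ → Polynomial ℚ
  | 0 => Polynomial.X
  | n + 1 => f.comp (polyIter f n)

/-- The `p`-adic valuation of a rational number, viewed as a rational number. -/
def nuQ (p : ℕ) (x : ℚ) : ℚ := (padicValRat p x : ℚ)

/-- `NP_p(h)` has successive vertices `(xs 0, ys 0), …, (xs t, ys t)`:
the corresponding coefficients are nonzero and have the prescribed valuations,
the slopes are strictly increasing, and every point of the Newton diagram lies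
on or above the polygon. -/
def HasNPVertices (p : ℕ) (h : Polynomial ℚ) (t : ℕ) (xs : ℕ → ℕ) (ys : ℕ → ℚ) : Prop :=
  h.coeff 0 ≠ 0 ∧
  xs 0 = 0 ∧ xs t = h.natDegree ∧
  (∀ s, s < t → xs s < xs (s + 1)) ∧
  (∀ s, s ≤ t → h.coeff (h.natDegree - xs s) ≠ 0 ∧
      nuQ p (h.coeff (h.natDegree - xs s)) = ys s) ∧
  (∀ s, 1 ≤ s → s < t →
      (ys s - ys (s - 1)) / ((xs s : ℚ) - (xs (s - 1) : ℚ)) <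
        (ys (s + 1) - ys s) / ((xs (s + 1) : ℚ) - (xs s : ℚ))) ∧
  (∀ s, 1 ≤ s → s ≤ t → ∀ i, h.coeff i ≠ 0 →
      xs (s - 1) ≤ h.natDegree - i → h.natDegree - i ≤ xs s →
      ys (s - 1) + ((ys s - ys (s - 1)) / ((xs s : ℚ) - (xs (s - 1) : ℚ))) *
          (((h.natDegree - i : ℕ) : ℚ) - (xs (s - 1) : ℚ)) ≤ nuQ p (h.coeff i))

/-- The number of irreducible factors of a polynomial over `ℚ`,
counted with multiplicity. -/
noncomputable def numFactors (P : Polynomial ℚ) : ℕ :=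
  (UniqueFactorizationMonoid.factors P).card

/-- `f` is `p^r`-pure. -/
def IsPpure (p r : ℕ) (f : Polynomial ℚ) : Prop :=
  f.coeff 0 ≠ 0 ∧
  padicValRat p f.leadingCoeff = 0 ∧
  padicValRat p (f.coeff 0) = (r : ℤ) ∧
  ∀ i, 0 < i → i < f.natDegree → f.coeff i ≠ 0 →
    (r : ℚ) / (f.natDegree : ℚ) ≤ nuQ p (f.coeff i) / ((f.natDegree : ℚ) - (i : ℚ))
set_option linter.unusedSectionVars false


section NPAux
variable {p : ℕ} [hp : Fact p.Prime]

lemma nuQ_mul {x y : ℚ} (hx : x ≠ 0) (hy : y ≠ 0) : nuQ p (x*y) = nuQ p x + nuQ p y := by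
  simp [nuQ, padicValRat.mul hx hy]

lemma nuQ_pow {x : ℚ} (hx : x ≠ 0) (k : ℕ) : nuQ p (x ^ k) = k * nuQ p x := by
  simp [nuQ, padicValRat.pow x]

lemma nuQ_neg (x : ℚ) : nuQ p (-x) = nuQ p x := by simp [nuQ, padicValRat.neg]

lemma nuQ_min_le_add {x y : ℚ} (h : x + y ≠ 0) : min (nuQ p x) (nuQ p y) ≤ nuQ p (x+y) := by
  have := padicValRat.min_le_padicValRat_add (p := p) h
  simp only [nuQ]
  exact_mod_cast this

def VQ (p : ℕ) (c x : ℚ) : Prop := x = 0 ∨ c ≤ nuQ p x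
def VS (p : ℕ) (c x : ℚ) : Prop := x = 0 ∨ c < nuQ p x

lemma VQ.add {c x y : ℚ} (hx : VQ p c x) (hy : VQ p c y) : VQ p c (x + y) := by
  rcases hx with rfl | hx
  · simpa only [zero_add] using hy
  rcases hy with rfl | hy
  · rw [add_zero]; exact Or.inr hx
  by_cases h : x + y = 0
  · exact Or.inl h
  · exact Or.inr (le_trans (le_min hx hy) (nuQ_min_le_add h))

lemma VS.add {c x y : ℚ} (hx : VS p c x) (hy : VS p c y) : VS p c (x + y) := by
  rcases hx with rfl | hx
  · simpa only [zero_add] using hy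
  rcases hy with rfl | hy
  · rw [add_zero]; exact Or.inr hx
  by_cases h : x + y = 0
  · exact Or.inl h
  · exact Or.inr (lt_of_lt_of_le (lt_min hx hy) (nuQ_min_le_add h))

lemma VQ.sum {ι : Type*} {st : Finset ι} {c : ℚ} {F : ι → ℚ}
    (h : ∀ i ∈ st, VQ p c (F i)) : VQ p c (∑ i ∈ st, F i) :=
  Finset.sum_induction F (VQ p c) (fun _ _ => VQ.add) (Or.inl rfl) h

lemma VS.sum {ι : Type*} {st : Finset ι} {c : ℚ} {F : ι → ℚ}
    (h : ∀ i ∈ st, VS p c (F i)) : VS p c (∑ i ∈ st, F i) :=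
  Finset.sum_induction F (VS p c) (fun _ _ => VS.add) (Or.inl rfl) h

lemma VQ.mono {c c' x : ℚ} (h : c' ≤ c) : VQ p c x → VQ p c' x := by
  rintro (rfl | hx)
  · exact Or.inl rfl
  · exact Or.inr (le_trans h hx)

lemma VQ.mul {c c' x y : ℚ} (hx : VQ p c x) (hy : VQ p c' y) : VQ p (c + c') (x * y) := by
  by_cases h0 : x = 0
  · exact Or.inl (by rw [h0, zero_mul])
  by_cases h1 : y = 0
  · exact Or.inl (by rw [h1, mul_zero])
  rcases hx with rfl | hx
  · exact absurd rfl h0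
  rcases hy with rfl | hy
  · exact absurd rfl h1
  exact Or.inr (by rw [nuQ_mul h0 h1]; exact add_le_add hx hy)

lemma nuQ_add_eq {c x y : ℚ} (hx : x ≠ 0) (hvx : nuQ p x = c) (hy : VS p c y) :
    x + y ≠ 0 ∧ nuQ p (x + y) = c := by
  by_cases hy0 : y = 0
  · subst hy0; simpa only [add_zero] using ⟨hx, hvx⟩
  rcases hy with rfl | hy
  · exact absurd rfl hy0
  have hne : x + y ≠ 0 := by
    intro h
    have hyx : y = -x := by linarith [h]
    rw [hyx, nuQ_neg, hvx] at hy
    exact lt_irrefl c hy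
  refine ⟨hne, ?_⟩
  have h1 : c ≤ nuQ p (x + y) := by
    have := nuQ_min_le_add (p := p) hne
    have h2 : c ≤ min (nuQ p x) (nuQ p y) := le_min hvx.ge hy.le
    linarith
  by_contra hc
  have h2 : c < nuQ p (x + y) := lt_of_le_of_ne h1 (Ne.symm hc)
  have h3 : min (nuQ p (x+y)) (nuQ p (-y)) ≤ nuQ p ((x+y) + (-y)) :=
    nuQ_min_le_add (by simpa only [add_neg_cancel_right] using hx)
  rw [add_neg_cancel_right, nuQ_neg, hvx] at h3
  have h4 : c < min (nuQ p (x+y)) (nuQ p y) := lt_min h2 hy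
  linarith

lemma claimA {p : ℕ} [hp : Fact p.Prime] {f : Polynomial ℚ} {d : ℕ} (hfd : f.natDegree = d)
    {c : ℚ} (hc : 0 ≤ c)
    (hai : ∀ i, i ≤ d → f.coeff i ≠ 0 → c * ((d:ℚ) - (i:ℚ)) ≤ nuQ p (f.coeff i)) :
    ∀ k i : ℕ, VQ p (c * ((k:ℚ) * (d:ℚ) - (i:ℚ))) ((f ^ k).coeff i) := by
  intro k
  induction k with
  | zero =>
    intro i
    rcases Nat.eq_zero_or_pos i with rfl | hi
    · exact Or.inr (by simp [pow_zero, coeff_one, nuQ])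
    · exact Or.inl (by rw [pow_zero, coeff_one, if_neg (by omega)])
  | succ k ih =>
    intro i
    rw [pow_succ, coeff_mul]
    refine VQ.sum ?_
    intro x hx
    have hxy : x.1 + x.2 = i := Finset.HasAntidiagonal.mem_antidiagonal.mp hx
    have hcast : (x.1:ℚ) + (x.2:ℚ) = (i:ℚ) := by exact_mod_cast hxy
    have hf2 : VQ p (c * ((d:ℚ) - (x.2:ℚ))) (f.coeff x.2) := by
      by_cases h0 : f.coeff x.2 = 0
      · exact Or.inl h0
      · exact Or.inr (hai x.2 (hfd ▸ le_natDegree_of_ne_zero h0) h0)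
    refine VQ.mono (le_of_eq ?_) (VQ.mul (ih x.1) hf2)
    push_cast
    linear_combination c * hcast

end NPAux


noncomputable def npLam (p : ℕ) (g : Polynomial ℚ) (m : ℕ → ℕ) (s : ℕ) : ℚ :=
  (nuQ p (g.coeff (m s)) - nuQ p (g.coeff (m (s-1)))) / ((m (s-1) : ℚ) - (m s : ℚ))

noncomputable def npL (p : ℕ) (g : Polynomial ℚ) (m : ℕ → ℕ) (s : ℕ) (α : ℚ) : ℚ :=
  nuQ p (g.coeff (m (s-1))) + npLam p g m s * ((m (s-1) : ℚ) - α)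


/-- Theorem 1.6 (main thm 2): stretching of the Newton polygon (possibly with
negative slopes) under composition. -/
theorem newton_polygon_comp
    (p : ℕ) (hp : p.Prime)
    (g f : Polynomial ℚ) (e d t : ℕ) (m : ℕ → ℕ)
    (hge : g.natDegree = e) (he1 : 1 ≤ e)
    (hb0 : g.coeff 0 ≠ 0)
    (hm0 : m 0 = e) (hmt : m t = 0)
    (hmdec : ∀ s, s < t → m (s + 1) < m s)
    (hNPg : HasNPVertices p g t (fun s => e - m s) (fun s => nuQ p (g.coeff (m s))))
    (u : ℤ) (β : ℕ) (hβ : 1 ≤ β) (hβd : β ≤ d)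
    (hgcdβu : Int.gcd (β : ℤ) u = 1)
    (hu : ∀ j, 1 ≤ j → j ≤ t →
      |(nuQ p (g.coeff (m j)) - nuQ p (g.coeff (m (j - 1)))) /
          ((m (j - 1) : ℚ) - (m j : ℚ))| < (u : ℚ))
    (hfd : f.natDegree = d)
    (had : padicValRat p (f.coeff d) = 0)
    (hai : ∀ i, i ≤ d → f.coeff i ≠ 0 →
      (u : ℚ) / (β : ℚ) * ((d : ℚ) - (i : ℚ)) ≤ nuQ p (f.coeff i)) :
    HasNPVertices p (g.comp f) t
      (fun s => d * (e - m s)) (fun s => nuQ p (g.coeff (m s))) := by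
  classical
  haveI : Fact p.Prime := ⟨hp⟩
  simp only [HasNPVertices] at hNPg
  obtain ⟨hg0, hgx0, hgxt, hgxmono, hgvert, hgslope, hgabove⟩ := hNPg
  have hd1 : 1 ≤ d := le_trans hβ hβd
  have hdQ : (0:ℚ) < d := by exact_mod_cast hd1
  have hβQ : (0:ℚ) < β := by exact_mod_cast hβ
  have ht1 : 1 ≤ t := by
    by_contra h
    have h0 : t = 0 := by omega
    rw [h0] at hmt
    omega
  have hmono : ∀ a b : ℕ, a ≤ b → b ≤ t → m b ≤ m a := by
    intro a b hab hbt
    induction b with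
    | zero => exact Nat.le_of_eq (by rw [Nat.le_zero.mp hab])
    | succ n ih =>
      rcases Nat.eq_or_lt_of_le hab with h | h
      · rw [h]
      · exact le_trans (le_of_lt (hmdec n (by omega))) (ih (by omega) (by omega))
  have hmle : ∀ s, s ≤ t → m s ≤ e := fun s hs => hm0 ▸ hmono 0 s (Nat.zero_le _) hs
  have hmlt : ∀ s, 1 ≤ s → s ≤ t → m s < m (s-1) := by
    intro s h1 h2
    have h3 := hmdec (s-1) (by omega)
    have hss : s - 1 + 1 = s := by omega
    rwa [hss] at h3
  have hbms : ∀ s, s ≤ t → g.coeff (m s) ≠ 0 := by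
    intro s hs
    have h := (hgvert s hs).1
    have hidx : g.natDegree - (e - m s) = m s := by rw [hge]; have := hmle s hs; omega
    rwa [hidx] at h
  have hlamu : ∀ s, 1 ≤ s → s ≤ t → |npLam p g m s| < (u:ℚ) := fun s h1 h2 => hu s h1 h2
  have hupos : (0:ℚ) < (u:ℚ) := lt_of_le_of_lt (abs_nonneg _) (hlamu 1 le_rfl ht1)
  have hud : (u:ℚ) ≤ (u:ℚ) * d / β := by
    rw [le_div_iff₀ hβQ]
    have hdb : (β:ℚ) ≤ (d:ℚ) := by exact_mod_cast hβd
    nlinarith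
  have hlamY : ∀ s, 1 ≤ s → s ≤ t →
      npLam p g m s * ((m (s-1):ℚ) - (m s:ℚ)) = nuQ p (g.coeff (m s)) - nuQ p (g.coeff (m (s-1))) := by
    intro s h1 h2
    have h3 : (m s:ℚ) < (m (s-1):ℚ) := by exact_mod_cast hmlt s h1 h2
    exact div_mul_cancel₀ _ (sub_pos.mpr h3).ne'
  have hLvertex : ∀ s, 1 ≤ s → s ≤ t → npL p g m s ((m s : ℚ)) = nuQ p (g.coeff (m s)) := by
    intro s h1 h2
    simp only [npL]
    rw [hlamY s h1 h2]; ring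
  have hcast : ∀ a b : ℕ, a ≤ t → b ≤ t → ((e - m a : ℕ):ℚ) - ((e - m b : ℕ):ℚ) = (m b:ℚ) - (m a:ℚ) := by
    intro a b ha hb
    rw [Nat.cast_sub (hmle a ha), Nat.cast_sub (hmle b hb)]
    ring
  have hlam_mono : ∀ s, 1 ≤ s → s < t → npLam p g m s < npLam p g m (s+1) := by
    intro s h1 h2
    have h := hgslope s h1 h2
    rw [hcast s (s-1) (by omega) (by omega), hcast (s+1) s (by omega) (by omega)] at h
    simpa only [npLam, Nat.add_sub_cancel] using h
  have hlam_le : ∀ a b, 1 ≤ a → a ≤ b → b ≤ t → npLam p g m a ≤ npLam p g m b := by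
    intro a b h1 hab hbt
    induction b with
    | zero => omega
    | succ n ih =>
      rcases Nat.eq_or_lt_of_le hab with h | h
      · rw [h]
      · exact le_trans (ih (by omega) (by omega)) (le_of_lt (hlam_mono n (by omega) (by omega)))
  have habove : ∀ s, 1 ≤ s → s ≤ t → ∀ k : ℕ, g.coeff k ≠ 0 → m s ≤ k → k ≤ m (s-1) →
      npL p g m s (k:ℚ) ≤ nuQ p (g.coeff k) := by
    intro s h1 h2 k hk hk1 hk2
    have hke : k ≤ e := le_trans hk2 (hmle (s-1) (by omega))
    have hms1 := hmle (s-1) (show s - 1 ≤ t by omega)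
    have hms := hmle s h2
    have h := hgabove s h1 h2 k hk (by rw [hge]; omega) (by rw [hge]; omega)
    rw [hcast s (s-1) h2 (by omega)] at h
    rw [hge, Nat.cast_sub hke, Nat.cast_sub hms1] at h
    simp only [npL, npLam]
    calc nuQ p (g.coeff (m (s-1))) + (nuQ p (g.coeff (m s)) - nuQ p (g.coeff (m (s-1)))) / ((m (s-1):ℚ) - (m s:ℚ)) * ((m (s-1):ℚ) - (k:ℚ))
        = nuQ p (g.coeff (m (s-1))) + (nuQ p (g.coeff (m s)) - nuQ p (g.coeff (m (s-1)))) / ((m (s-1):ℚ) - (m s:ℚ)) * (((e:ℚ) - (k:ℚ)) - ((e:ℚ) - (m (s-1):ℚ))) := by ring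
      _ ≤ nuQ p (g.coeff k) := h
  -- chunk 2
  have hLstep : ∀ s, 1 ≤ s → s + 1 ≤ t → ∀ α : ℚ, (m s:ℚ) ≤ α →
      npL p g m (s+1) α ≤ npL p g m s α := by
    intro s h1 h2 α hα
    have hms : npL p g m s ((m s:ℚ)) = nuQ p (g.coeff (m s)) := hLvertex s h1 (by omega)
    have hll : npLam p g m s ≤ npLam p g m (s+1) := le_of_lt (hlam_mono s h1 (by omega))
    have hprod : npLam p g m (s+1) * ((m s:ℚ) - α) ≤ npLam p g m s * ((m s:ℚ) - α) :=
      mul_le_mul_of_nonpos_right hll (by linarith)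
    have hexp : npLam p g m s * ((m (s-1):ℚ) - α)
        = npLam p g m s * ((m (s-1):ℚ) - (m s:ℚ)) + npLam p g m s * ((m s:ℚ) - α) := by ring
    simp only [npL, Nat.add_sub_cancel] at hms ⊢
    linarith [hms, hprod, hexp]
  have hLmono : ∀ s' n, 1 ≤ s' → s' + n ≤ t → ∀ α : ℚ, (m s':ℚ) ≤ α →
      npL p g m (s'+n) α ≤ npL p g m s' α := by
    intro s' n h1
    induction n with
    | zero => intro _ α _; exact le_rfl
    | succ k ih =>
      intro hn α hα
      have hmsk : (m (s'+k) : ℚ) ≤ α :=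
        le_trans (by exact_mod_cast hmono s' (s'+k) (by omega) (by omega)) hα
      exact le_trans (hLstep (s'+k) (by omega) (by omega) α hmsk) (ih (by omega) α hα)
  have hseg : ∀ k : ℕ, k ≤ e → ∃ s', 1 ≤ s' ∧ s' ≤ t ∧ m s' ≤ k ∧ k ≤ m (s'-1) ∧
      ∀ s'', 1 ≤ s'' → m s'' ≤ k → s' ≤ s'' := by
    intro k hke
    have hex : ∃ s, 1 ≤ s ∧ m s ≤ k := ⟨t, ht1, by omega⟩
    refine ⟨Nat.find hex, (Nat.find_spec hex).1, Nat.find_le ⟨ht1, by omega⟩,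
      (Nat.find_spec hex).2, ?_, fun s'' h1 h2 => Nat.find_le ⟨h1, h2⟩⟩
    rcases Nat.eq_or_lt_of_le (Nat.find_spec hex).1 with h | h
    · rw [← h]
      simpa [hm0] using hke
    · have hne := Nat.find_min hex (show Nat.find hex - 1 < Nat.find hex by omega)
      by_contra hc
      exact hne ⟨by omega, by omega⟩
  have hchain : ∀ s, 1 ≤ s → s ≤ t → ∀ k : ℕ, g.coeff k ≠ 0 → m s ≤ k →
      npL p g m s (k:ℚ) ≤ nuQ p (g.coeff k) := by
    intro s h1 h2 k hk hmsk
    obtain ⟨s', hs1, hst, hsk, hks, hmin⟩ := hseg k (hge ▸ le_natDegree_of_ne_zero hk)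
    have hs's : s' ≤ s := hmin s h1 hmsk
    have h3 : npL p g m s (k:ℚ) ≤ npL p g m s' (k:ℚ) := by
      have h4 := hLmono s' (s - s') hs1 (by omega) (k:ℚ) (by exact_mod_cast hsk)
      rwa [show s' + (s - s') = s by omega] at h4
    exact le_trans h3 (habove s' hs1 hst k hk hsk hks)
  have hcore : ∀ s, 1 ≤ s → s ≤ t → ∀ k : ℕ, g.coeff k ≠ 0 → m s ≤ k → ∀ α : ℚ,
      (m s:ℚ) ≤ α → α ≤ (k:ℚ) →
      (npL p g m s α ≤ nuQ p (g.coeff k) + (u:ℚ)*(d:ℚ)/(β:ℚ) * ((k:ℚ) - α) ∧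
      (α < (k:ℚ) → npL p g m s α < nuQ p (g.coeff k) + (u:ℚ)*(d:ℚ)/(β:ℚ) * ((k:ℚ) - α))) := by
    intro s h1 h2 k hk hmsk α h3 h4
    have hch := hchain s h1 h2 k hk hmsk
    have hlam : npLam p g m s < (u:ℚ)*(d:ℚ)/(β:ℚ) :=
      lt_of_lt_of_le (lt_of_le_of_lt (le_abs_self _) (hlamu s h1 h2)) hud
    have hdiff : npL p g m s α - npL p g m s (k:ℚ) = npLam p g m s * ((k:ℚ) - α) := by
      simp only [npL]; ring
    constructor
    · have h5 : npLam p g m s * ((k:ℚ) - α) ≤ (u:ℚ)*(d:ℚ)/(β:ℚ) * ((k:ℚ) - α) :=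
        mul_le_mul_of_nonneg_right (le_of_lt hlam) (by linarith)
      linarith
    · intro h6
      have h5 : npLam p g m s * ((k:ℚ) - α) < (u:ℚ)*(d:ℚ)/(β:ℚ) * ((k:ℚ) - α) :=
        mul_lt_mul_of_pos_right hlam (by linarith)
      linarith
  -- chunk 3 : analytic side
  have hc0 : (0:ℚ) ≤ (u:ℚ)/(β:ℚ) := le_of_lt (div_pos hupos hβQ)
  have hA := claimA (p := p) hfd hc0 hai
  have hfne : f ≠ 0 := by
    intro h
    rw [h, natDegree_zero] at hfd
    omega
  have hfd0 : f.coeff d ≠ 0 := by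
    have h := leadingCoeff_ne_zero.mpr hfne
    rwa [leadingCoeff, hfd] at h
  have hnu_ad : nuQ p (f.coeff d) = 0 := by simp [nuQ, had]
  have hpow : ∀ k : ℕ, (f ^ k).coeff (k * d) = f.coeff d ^ k := by
    intro k
    rw [← hfd]
    exact coeff_pow_mul_natDegree f k
  have hcomp : ∀ i, (g.comp f).coeff i = ∑ k ∈ g.support, g.coeff k * (f ^ k).coeff i := by
    intro i
    rw [comp_eq_sum_left, Polynomial.sum_def, finset_sum_coeff]
    simp [coeff_C_mul]
  have hD : (g.comp f).natDegree = d * e := by rw [natDegree_comp, hge, hfd, Nat.mul_comm]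
  have hvtx : ∀ s, s ≤ t → (g.comp f).coeff (d * m s) ≠ 0 ∧
      nuQ p ((g.comp f).coeff (d * m s)) = nuQ p (g.coeff (m s)) := by
    intro s hs
    have hmem : m s ∈ g.support := mem_support_iff.mpr (hbms s hs)
    have hsplit : (g.comp f).coeff (d * m s)
        = g.coeff (m s) * (f ^ (m s)).coeff (d * m s)
          + ∑ k ∈ g.support.erase (m s), g.coeff k * (f ^ k).coeff (d * m s) := by
      rw [hcomp, ← Finset.add_sum_erase _ _ hmem]
    have hmain0 : (f ^ (m s)).coeff (d * m s) = f.coeff d ^ (m s) := by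
      rw [Nat.mul_comm]; exact hpow (m s)
    have hmainne : g.coeff (m s) * (f ^ (m s)).coeff (d * m s) ≠ 0 := by
      rw [hmain0]; exact mul_ne_zero (hbms s hs) (pow_ne_zero _ hfd0)
    have hmainval : nuQ p (g.coeff (m s) * (f ^ (m s)).coeff (d * m s)) = nuQ p (g.coeff (m s)) := by
      rw [hmain0, nuQ_mul (hbms s hs) (pow_ne_zero _ hfd0), nuQ_pow hfd0, hnu_ad]; ring
    have hrest : VS p (nuQ p (g.coeff (m s)))
        (∑ k ∈ g.support.erase (m s), g.coeff k * (f ^ k).coeff (d * m s)) := by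
      refine VS.sum ?_
      intro k hkmem
      have hkne : k ≠ m s := (Finset.mem_erase.mp hkmem).1
      have hksup : g.coeff k ≠ 0 := mem_support_iff.mp (Finset.mem_erase.mp hkmem).2
      have hke : k ≤ e := hge ▸ le_natDegree_of_ne_zero hksup
      by_cases h0 : (f ^ k).coeff (d * m s) = 0
      · exact Or.inl (by rw [h0, mul_zero])
      have hdeg : d * m s ≤ k * d := by
        have h := le_natDegree_of_ne_zero h0
        rwa [natDegree_pow, hfd] at h
      have hmsk : m s < k := by
        have h5 : d * m s ≤ d * k := by rwa [Nat.mul_comm k d] at hdeg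
        exact lt_of_le_of_ne (Nat.le_of_mul_le_mul_left h5 (by omega)) (Ne.symm hkne)
      rcases Nat.eq_zero_or_pos s with rfl | hs1
      · exfalso
        rw [hm0] at hmsk
        omega
      right
      rcases hA k (d * m s) with h' | h'
      · exact absurd h' h0
      have hν : nuQ p (g.coeff k * (f ^ k).coeff (d * m s))
          = nuQ p (g.coeff k) + nuQ p ((f ^ k).coeff (d * m s)) := nuQ_mul hksup h0
      have hcstr := (hcore s hs1 hs k hksup (le_of_lt hmsk) ((m s:ℚ)) le_rfl
        (by exact_mod_cast le_of_lt hmsk)).2 (by exact_mod_cast hmsk)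
      have hLms : npL p g m s ((m s:ℚ)) = nuQ p (g.coeff (m s)) := hLvertex s hs1 hs
      have heq : (u:ℚ)/(β:ℚ) * ((k:ℚ)*(d:ℚ) - ((d * m s : ℕ):ℚ))
          = (u:ℚ)*(d:ℚ)/(β:ℚ) * ((k:ℚ) - (m s:ℚ)) := by push_cast; ring
      rw [hν]
      calc nuQ p (g.coeff (m s)) = npL p g m s ((m s:ℚ)) := hLms.symm
        _ < nuQ p (g.coeff k) + (u:ℚ)*(d:ℚ)/(β:ℚ) * ((k:ℚ) - (m s:ℚ)) := hcstr
        _ ≤ nuQ p (g.coeff k) + nuQ p ((f ^ k).coeff (d * m s)) := by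
            rw [← heq]; linarith [h']
    rw [hsplit]
    exact nuQ_add_eq hmainne hmainval hrest
  have hbound : ∀ s, 1 ≤ s → s ≤ t → ∀ i : ℕ, d * m s ≤ i →
      VQ p (npL p g m s ((i:ℚ)/(d:ℚ))) ((g.comp f).coeff i) := by
    intro s h1 h2 i hi
    rw [hcomp]
    refine VQ.sum ?_
    intro k hk
    have hksup : g.coeff k ≠ 0 := mem_support_iff.mp hk
    by_cases h0 : (f ^ k).coeff i = 0
    · exact Or.inl (by rw [h0, mul_zero])
    right
    have hdeg : i ≤ k * d := by
      have h := le_natDegree_of_ne_zero h0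
      rwa [natDegree_pow, hfd] at h
    have hmsk : m s ≤ k := by
      have h5 : d * m s ≤ d * k := le_trans hi (by rwa [Nat.mul_comm] at hdeg)
      exact Nat.le_of_mul_le_mul_left h5 (by omega)
    have hαk : (i:ℚ)/(d:ℚ) ≤ (k:ℚ) := by
      rw [div_le_iff₀ hdQ]
      exact_mod_cast hdeg
    have hαm : (m s:ℚ) ≤ (i:ℚ)/(d:ℚ) := by
      rw [le_div_iff₀ hdQ]
      exact_mod_cast (by rwa [Nat.mul_comm] at hi : m s * d ≤ i)
    have hcs := (hcore s h1 h2 k hksup hmsk ((i:ℚ)/(d:ℚ)) hαm hαk).1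
    rcases hA k i with h' | h'
    · exact absurd h' h0
    have hν := nuQ_mul (p := p) hksup h0
    have heq : (u:ℚ)/(β:ℚ) * ((k:ℚ)*(d:ℚ) - (i:ℚ))
        = (u:ℚ)*(d:ℚ)/(β:ℚ) * ((k:ℚ) - (i:ℚ)/(d:ℚ)) := by
      field_simp
    rw [hν]
    linarith [hcs, h']
  -- chunk 4 : assembly
  refine ⟨?_, ?_, ?_, ?_, ?_, ?_, ?_⟩
  · have h := (hvtx t le_rfl).1
    rwa [hmt, Nat.mul_zero] at h
  · show d * (e - m 0) = 0
    rw [hm0, Nat.sub_self, Nat.mul_zero]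
  · show d * (e - m t) = (g.comp f).natDegree
    rw [hmt, hD, Nat.sub_zero]
  · intro s hst
    show d * (e - m s) < d * (e - m (s+1))
    have h1 := hmdec s hst
    have h2 := hmle s (le_of_lt hst)
    exact mul_lt_mul_of_pos_left (by omega) (by omega)
  · intro s hs
    show (g.comp f).coeff ((g.comp f).natDegree - d * (e - m s)) ≠ 0 ∧
      nuQ p ((g.comp f).coeff ((g.comp f).natDegree - d * (e - m s))) = nuQ p (g.coeff (m s))
    have h2 := hmle s hs
    have hidx : (g.comp f).natDegree - d * (e - m s) = d * m s := by
      rw [hD]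
      have h3 : e = (e - m s) + m s := by omega
      calc d * e - d * (e - m s) = d * ((e - m s) + m s) - d * (e - m s) := by rw [← h3]
        _ = d * m s := by rw [Nat.mul_add, Nat.add_sub_cancel_left]
    rw [hidx]
    exact hvtx s hs
  · intro s h1 h2
    show (nuQ p (g.coeff (m s)) - nuQ p (g.coeff (m (s-1)))) /
        (((d * (e - m s) : ℕ):ℚ) - ((d * (e - m (s-1)) : ℕ):ℚ)) <
      (nuQ p (g.coeff (m (s+1))) - nuQ p (g.coeff (m s))) /
        (((d * (e - m (s+1)) : ℕ):ℚ) - ((d * (e - m s) : ℕ):ℚ))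
    have hstep := hlam_mono s h1 h2
    simp only [npLam, Nat.add_sub_cancel] at hstep
    have hc1 : ∀ a : ℕ, a ≤ t → ((d * (e - m a) : ℕ):ℚ) = (d:ℚ) * ((e:ℚ) - (m a:ℚ)) := by
      intro a ha
      rw [Nat.cast_mul, Nat.cast_sub (hmle a ha)]
    rw [hc1 s (by omega), hc1 (s-1) (by omega), hc1 (s+1) h2]
    have e1 : (d:ℚ) * ((e:ℚ) - (m s:ℚ)) - (d:ℚ) * ((e:ℚ) - (m (s-1):ℚ))
        = ((m (s-1):ℚ) - (m s:ℚ)) * d := by ring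
    have e2 : (d:ℚ) * ((e:ℚ) - (m (s+1):ℚ)) - (d:ℚ) * ((e:ℚ) - (m s:ℚ))
        = ((m s:ℚ) - (m (s+1):ℚ)) * d := by ring
    rw [e1, e2, ← div_div, ← div_div]
    exact div_lt_div_of_pos_right hstep hdQ
  · intro s h1 h2 i hi hx1 hx2
    show nuQ p (g.coeff (m (s-1))) +
        (nuQ p (g.coeff (m s)) - nuQ p (g.coeff (m (s-1)))) /
          (((d * (e - m s) : ℕ):ℚ) - ((d * (e - m (s-1)) : ℕ):ℚ)) *
        ((((g.comp f).natDegree - i : ℕ):ℚ) - ((d * (e - m (s-1)) : ℕ):ℚ))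
        ≤ nuQ p ((g.comp f).coeff i)
    have hiD : i ≤ d * e := by rw [← hD]; exact le_natDegree_of_ne_zero hi
    have hms := hmle s h2
    have hms1 := hmle (s-1) (show s - 1 ≤ t by omega)
    have him : d * m s ≤ i := by
      have hx2' : d * e - i ≤ d * (e - m s) := by
        rw [hD] at hx2
        exact hx2
      have hsplit : d * e = d * (e - m s) + d * m s := by
        rw [← Nat.mul_add]
        congr 1
        omega
      generalize hA1 : d * (e - m s) = A at hx2' hsplit
      generalize hB1 : d * m s = B at hsplit ⊢
      generalize hC1 : d * e = C at hiD hx2' hsplit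
      omega
    have hbd := hbound s h1 h2 i him
    rcases hbd with h' | h'
    · exact absurd h' hi
    have hc1 : ∀ a : ℕ, a ≤ t → ((d * (e - m a) : ℕ):ℚ) = (d:ℚ) * ((e:ℚ) - (m a:ℚ)) := by
      intro a ha
      rw [Nat.cast_mul, Nat.cast_sub (hmle a ha)]
    have hc2 : (((g.comp f).natDegree - i : ℕ):ℚ) = (d:ℚ) * (e:ℚ) - (i:ℚ) := by
      rw [hD, Nat.cast_sub hiD, Nat.cast_mul]
    rw [hc1 s h2, hc1 (s-1) (by omega), hc2]
    have hmm : (m s:ℚ) < (m (s-1):ℚ) := by exact_mod_cast hmlt s h1 h2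
    have hLeq : nuQ p (g.coeff (m (s-1))) +
        (nuQ p (g.coeff (m s)) - nuQ p (g.coeff (m (s-1)))) /
          ((d:ℚ) * ((e:ℚ) - (m s:ℚ)) - (d:ℚ) * ((e:ℚ) - (m (s-1):ℚ))) *
        (((d:ℚ) * (e:ℚ) - (i:ℚ)) - (d:ℚ) * ((e:ℚ) - (m (s-1):ℚ)))
        = npL p g m s ((i:ℚ)/(d:ℚ)) := by
      simp only [npL, npLam]
      have hne1 : (m (s-1):ℚ) - (m s:ℚ) ≠ 0 := (sub_pos.mpr hmm).ne'
      have e1 : (d:ℚ) * ((e:ℚ) - (m s:ℚ)) - (d:ℚ) * ((e:ℚ) - (m (s-1):ℚ))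
          = ((m (s-1):ℚ) - (m s:ℚ)) * d := by ring
      have hiQ : (m (s-1):ℚ) - (i:ℚ)/(d:ℚ) = ((d:ℚ) * (m (s-1):ℚ) - (i:ℚ)) / (d:ℚ) := by
        rw [sub_div, mul_div_cancel_left₀ _ (ne_of_gt hdQ)]
      rw [e1, hiQ, div_mul_div_comm, div_mul_eq_mul_div]
      congr 1
      congr 1
      ring
    rw [hLeq]
    exact h'
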